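/- arXiv:2110.14199 — 4 statements merged into one kernel-verified Lean document; each statement's English description precedes it below -/
import Mathlib

section
/- Let N ≥ 1, let a_{ij} (for i ≠ j in {1,…,N}) be nonnegative reals with a_{ij} = a_{ji}, let s_i ≥ 0, and define the modified Laplacian H by H_{ij} = −a_{ij} for i ≠ j and H_{ii} = Σ_{j ≠ i} a_{ij} + s_i. Assume that for every node i there is a finite path i = v_0, v_1, …, v_p with a_{v_l v_{l+1}} > 0 for each 0 ≤ l < p and s_{v_p} > 0 (i.e., every connected component of the positive-weight graph contains a node with a positive selfloop weight). Then H is positive definite: xᵀ H x > 0 for every nonzero x ∈ ℝᴺ, so all eigenvalues of H are real and strictly positive. -/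
open Matrix

lemma swap_sum_aux {N : ℕ} (f : Fin N → Fin N → ℝ) :
    ∑ i, ∑ j ∈ Finset.univ.erase i, f i j = ∑ i, ∑ j ∈ Finset.univ.erase i, f j i := by
  rw [Finset.sum_comm' (t' := Finset.univ) (s' := fun j => Finset.univ.erase j)]
  intro x y
  simp [ne_comm]

lemma quad_form {N : ℕ} (a : Fin N → Fin N → ℝ) (s : Fin N → ℝ)
    (ha_symm : ∀ i j, i ≠ j → a i j = a j i)
    (H : Matrix (Fin N) (Fin N) ℝ)
    (hH : ∀ i j, H i j =
      if i = j then (∑ k ∈ Finset.univ.filter (fun k => k ≠ i), a i k) + s i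
      else -(a i j)) (x : Fin N → ℝ) :
    x ⬝ᵥ H.mulVec x =
      (∑ i, ∑ j ∈ Finset.univ.erase i, a i j * (x i - x j) ^ 2) / 2
        + ∑ i, s i * x i ^ 2 := by
  have hmv : ∀ i, H.mulVec x i =
      (∑ j ∈ Finset.univ.erase i, a i j * (x i - x j)) + s i * x i := by
    intro i
    simp only [mulVec, dotProduct]
    rw [← Finset.sum_erase_add _ _ (Finset.mem_univ i)]
    have h1 : ∀ j ∈ Finset.univ.erase i, H i j * x j = -(a i j * x j) := by
      intro j hj
      rw [hH]
      rw [if_neg (Ne.symm (Finset.ne_of_mem_erase hj))]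
      ring
    rw [Finset.sum_congr rfl h1, hH, if_pos rfl]
    have h2 : Finset.univ.filter (fun k => k ≠ i) = Finset.univ.erase i :=
      Finset.filter_ne' _ _
    rw [h2]
    rw [Finset.sum_neg_distrib, add_mul, Finset.sum_mul]
    rw [show (∑ j ∈ Finset.univ.erase i, a i j * (x i - x j))
        = ∑ j ∈ Finset.univ.erase i, (a i j * x i - a i j * x j) from
      Finset.sum_congr rfl (fun j _ => by ring)]
    rw [Finset.sum_sub_distrib]
    ring
  have hswap : ∑ i, ∑ j ∈ Finset.univ.erase i, a i j * (x i * (x i - x j)) =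
      ∑ i, ∑ j ∈ Finset.univ.erase i, a i j * (x j * (x j - x i)) := by
    rw [swap_sum_aux (fun i j => a i j * (x i * (x i - x j)))]
    refine Finset.sum_congr rfl fun i _ => Finset.sum_congr rfl fun j hj => ?_
    rw [ha_symm j i (Finset.ne_of_mem_erase hj)]
  have hsq : ∑ i, ∑ j ∈ Finset.univ.erase i, a i j * (x i * (x i - x j)) =
      (∑ i, ∑ j ∈ Finset.univ.erase i, a i j * (x i - x j) ^ 2) / 2 := by
    have : (∑ i, ∑ j ∈ Finset.univ.erase i, a i j * (x i - x j) ^ 2)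
        = ∑ i, ∑ j ∈ Finset.univ.erase i,
            (a i j * (x i * (x i - x j)) + a i j * (x j * (x j - x i))) := by
      refine Finset.sum_congr rfl fun i _ => Finset.sum_congr rfl fun j _ => ?_
      ring
    rw [this]
    simp only [Finset.sum_add_distrib]
    rw [← hswap]
    ring
  simp only [dotProduct]
  rw [Finset.sum_congr rfl (fun i (_ : i ∈ Finset.univ) => by rw [hmv i] :
    ∀ i ∈ Finset.univ, x i * H.mulVec x i
      = x i * ((∑ j ∈ Finset.univ.erase i, a i j * (x i - x j)) + s i * x i))]
  have hexp : ∀ i : Fin N, x i * ((∑ j ∈ Finset.univ.erase i, a i j * (x i - x j)) + s i * x i)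
      = (∑ j ∈ Finset.univ.erase i, a i j * (x i * (x i - x j))) + s i * x i ^ 2 := by
    intro i
    rw [mul_add, Finset.mul_sum]
    congr 1
    · exact Finset.sum_congr rfl fun j _ => by ring
    · ring
  rw [Finset.sum_congr rfl fun i _ => hexp i, Finset.sum_add_distrib, hsq]

/-- With the modified Laplacian `H` of a control sublayer graph (nonnegative symmetric
edge weights `a`, nonnegative selfloop weights `s`), if from every node `i` there is
a finite path `i = v 0, v 1, …, v p` of positive-weight edges
(`0 < a (v l) (v (l+1))` for `l < p`) ending at a node with a positive selfloop
weight (`0 < s (v p)`), then `H` is positive definite: `xᵀ H x > 0` for every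
nonzero `x ∈ ℝᴺ`, and all (real) eigenvalues of `H` are strictly positive. -/
theorem stmt5 {N : ℕ} (hN : 1 ≤ N)
    (a : Fin N → Fin N → ℝ) (s : Fin N → ℝ)
    (ha_nonneg : ∀ i j, i ≠ j → 0 ≤ a i j)
    (ha_symm : ∀ i j, i ≠ j → a i j = a j i)
    (hs : ∀ i, 0 ≤ s i)
    (H : Matrix (Fin N) (Fin N) ℝ)
    (hH : ∀ i j, H i j =
      if i = j then (∑ k ∈ Finset.univ.filter (fun k => k ≠ i), a i k) + s i
      else -(a i j))
    (hpath : ∀ i : Fin N, ∃ (p : ℕ) (v : ℕ → Fin N), v 0 = i ∧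
      (∀ l, l < p → 0 < a (v l) (v (l + 1))) ∧ 0 < s (v p)) :
    H.PosDef ∧
      (∀ x : Fin N → ℝ, x ≠ 0 → 0 < x ⬝ᵥ H.mulVec x) ∧
      (∀ μ ∈ spectrum ℝ H, 0 < μ) := by
  have hpos : ∀ x : Fin N → ℝ, x ≠ 0 → 0 < x ⬝ᵥ H.mulVec x := by
    intro x hx
    rw [quad_form a s ha_symm H hH x]
    have hterm : ∀ i : Fin N, ∀ j ∈ Finset.univ.erase i, 0 ≤ a i j * (x i - x j) ^ 2 :=
      fun i j hj => mul_nonneg (ha_nonneg i j (Ne.symm (Finset.ne_of_mem_erase hj)))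
        (sq_nonneg _)
    have h1 : 0 ≤ (∑ i, ∑ j ∈ Finset.univ.erase i, a i j * (x i - x j) ^ 2) / 2 :=
      div_nonneg (Finset.sum_nonneg fun i _ =>
        Finset.sum_nonneg fun j hj => hterm i j hj) (by norm_num)
    have h2 : 0 ≤ ∑ i, s i * x i ^ 2 :=
      Finset.sum_nonneg fun i _ => mul_nonneg (hs i) (sq_nonneg _)
    by_contra hle
    push_neg at hle
    have hQ0 : (∑ i, ∑ j ∈ Finset.univ.erase i, a i j * (x i - x j) ^ 2) / 2
        + ∑ i, s i * x i ^ 2 = 0 := le_antisymm hle (add_nonneg h1 h2)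
    obtain ⟨hA0, hS0⟩ := (add_eq_zero_iff_of_nonneg h1 h2).mp hQ0
    have hA0' : ∑ i, ∑ j ∈ Finset.univ.erase i, a i j * (x i - x j) ^ 2 = 0 := by
      linarith
    have hedge : ∀ i j : Fin N, i ≠ j → 0 < a i j → x i = x j := by
      intro i j hij haij
      have hin : ∑ j ∈ Finset.univ.erase i, a i j * (x i - x j) ^ 2 = 0 :=
        (Finset.sum_eq_zero_iff_of_nonneg fun i _ =>
          Finset.sum_nonneg fun j hj => hterm i j hj).mp hA0' i (Finset.mem_univ i)
      have ht : a i j * (x i - x j) ^ 2 = 0 :=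
        (Finset.sum_eq_zero_iff_of_nonneg (hterm i)).mp hin j
          (Finset.mem_erase.mpr ⟨Ne.symm hij, Finset.mem_univ j⟩)
      have := (mul_eq_zero.mp ht).resolve_left (ne_of_gt haij)
      have := pow_eq_zero_iff (n := 2) (by norm_num) |>.mp this
      linarith [sub_eq_zero.mp this]
    have hself : ∀ i : Fin N, 0 < s i → x i = 0 := by
      intro i hsi
      have ht : s i * x i ^ 2 = 0 :=
        (Finset.sum_eq_zero_iff_of_nonneg fun i _ =>
          mul_nonneg (hs i) (sq_nonneg _)).mp hS0 i (Finset.mem_univ i)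
      have := (mul_eq_zero.mp ht).resolve_left (ne_of_gt hsi)
      exact pow_eq_zero_iff (n := 2) (by norm_num) |>.mp this
    obtain ⟨i0, hi0⟩ := Function.ne_iff.mp hx
    simp only [Pi.zero_apply] at hi0
    obtain ⟨p, v, hv0, hve, hvs⟩ := hpath i0
    have hconst : ∀ l, l ≤ p → x (v l) = x i0 := by
      intro l
      induction l with
      | zero => intro _; rw [hv0]
      | succ l ih =>
        intro hl
        have hl' : l < p := Nat.lt_of_succ_le hl
        have hprev := ih (le_of_lt hl')
        by_cases hvv : v l = v (l + 1)
        · rw [← hvv]; exact hprev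
        · rw [← hedge (v l) (v (l + 1)) hvv (hve l hl')]; exact hprev
    exact hi0 (hconst p le_rfl ▸ hself (v p) hvs)
  have hherm : H.IsHermitian := by
    ext i j
    simp only [conjTranspose_apply, star_trivial]
    rw [hH, hH]
    by_cases h : i = j
    · subst h; simp
    · rw [if_neg (Ne.symm h), if_neg h, ha_symm j i (Ne.symm h)]
  have hpd : H.PosDef := posDef_iff_dotProduct_mulVec.mpr ⟨hherm, fun x hx => by
    simpa using hpos x hx⟩
  refine ⟨hpd, hpos, ?_⟩
  intro μ hμ
  rw [hherm.spectrum_real_eq_range_eigenvalues] at hμ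
  obtain ⟨i, rfl⟩ := hμ
  exact hpd.eigenvalues_pos i
end

section
/- Let A, P, Q be real n×n matrices with P, Q symmetric, B_u a real n×m matrix, R a symmetric positive definite real m×m matrix, μ > 0, a_f > 0, a_d > 0, c ≥ 0, and set Q_f := Q + (a_f c + a_d) I_n. Suppose the algebraic Riccati equation Aᵀ P + P A + Q_f − μ² P B_u R⁻¹ B_uᵀ P = 0 holds and let K := −μ R⁻¹ B_uᵀ P. Let E be a real m×m matrix, B_f a real n×g matrix, B_d a real n×q matrix. Then for all x ∈ ℝⁿ, d ∈ ℝ^q and all f ∈ ℝᵍ with fᵀ f ≤ c · xᵀ x, setting v := K x and w := A x + μ B_u v + μ B_u E v + B_f f + B_d d, one has 2 xᵀ P w ≤ −xᵀ (Q + Kᵀ R K + 2 Kᵀ R E K − (1/a_f) P B_f B_fᵀ P) x + (1/a_d) ‖P B_d‖² ‖d‖², where ‖·‖ denotes the ℓ²-operator norm on matrices and the Euclidean norm on vectors. -/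
open Matrix

/-- The ℓ²-operator norm (induced 2-norm) of a real matrix: the operator norm of the
associated linear map between Euclidean spaces. -/
noncomputable def l2OpNorm {p n : ℕ} (M : Matrix (Fin p) (Fin n) ℝ) : ℝ :=
  ‖(Matrix.toEuclideanLin M).toContinuousLinearMap‖

-- Young inequality for dot products
lemma young {k : ℕ} (a : ℝ) (ha : 0 < a) (u v : Fin k → ℝ) :
    2 * (u ⬝ᵥ v) ≤ a * (u ⬝ᵥ u) + (1/a) * (v ⬝ᵥ v) := by
  have h : (0:ℝ) ≤ (a • u - v) ⬝ᵥ (a • u - v) := by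
    apply Finset.sum_nonneg; intro i _; exact mul_self_nonneg _
  have hexp : (a • u - v) ⬝ᵥ (a • u - v)
      = a^2 * (u ⬝ᵥ u) - 2*a*(u ⬝ᵥ v) + v ⬝ᵥ v := by
    simp [sub_dotProduct, dotProduct_sub, smul_dotProduct, dotProduct_smul,
      dotProduct_comm v u]
    ring
  rw [hexp] at h
  have ha' : (0:ℝ) < a := ha
  have : (1/a) * (v ⬝ᵥ v) = (v ⬝ᵥ v)/a := by ring
  rw [this, ← sub_nonneg]
  have he : a * (u ⬝ᵥ u) + (v ⬝ᵥ v)/a - 2*(u ⬝ᵥ v)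
      = (a^2 * (u ⬝ᵥ u) - 2*a*(u ⬝ᵥ v) + v ⬝ᵥ v)/a := by
    field_simp; ring
  rw [he]
  exact div_nonneg h ha.le

lemma opnorm_bound {p k : ℕ} (M : Matrix (Fin p) (Fin k) ℝ) (u : Fin k → ℝ) :
    (M.mulVec u) ⬝ᵥ (M.mulVec u) ≤ (l2OpNorm M)^2 * (u ⬝ᵥ u) := by
  set T := (Matrix.toEuclideanLin M).toContinuousLinearMap
  have key : ‖T ((WithLp.equiv 2 (Fin k → ℝ)).symm u)‖
      ≤ l2OpNorm M * ‖(WithLp.equiv 2 (Fin k → ℝ)).symm u‖ := T.le_opNorm _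
  have hTy : T ((WithLp.equiv 2 (Fin k → ℝ)).symm u)
      = (WithLp.equiv 2 (Fin p → ℝ)).symm (M.mulVec u) := by
    simp [T, Matrix.toEuclideanLin_apply_piLp_toLp]
  have hnsq : ∀ (j : ℕ) (z : Fin j → ℝ),
      ‖(WithLp.equiv 2 (Fin j → ℝ)).symm z‖^2 = z ⬝ᵥ z := by
    intro j z
    rw [PiLp.norm_sq_eq_of_L2]
    simp [dotProduct, sq]
  have h2 : ‖(WithLp.equiv 2 (Fin p → ℝ)).symm (M.mulVec u)‖^2
      ≤ (l2OpNorm M * ‖(WithLp.equiv 2 (Fin k → ℝ)).symm u‖)^2 := by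
    rw [← hTy]
    exact pow_le_pow_left₀ (norm_nonneg _) key 2
  rw [hnsq] at h2
  rw [mul_pow, hnsq] at h2
  exact h2

lemma dot_shift {a b : ℕ} (M : Matrix (Fin a) (Fin b) ℝ) (x : Fin a → ℝ) (y : Fin b → ℝ) :
    x ⬝ᵥ M.mulVec y = Mᵀ.mulVec x ⬝ᵥ y := by
  rw [Matrix.dotProduct_mulVec, Matrix.mulVec_transpose]

lemma dot_self_transpose {a : ℕ} (N : Matrix (Fin a) (Fin a) ℝ) (x : Fin a → ℝ) :
    x ⬝ᵥ N.mulVec x = x ⬝ᵥ Nᵀ.mulVec x := by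
  rw [dot_shift, dotProduct_comm]


/-- With `Q_f := Q + (a_f c + a_d) I`, the algebraic Riccati equation
`Aᵀ P + P A + Q_f - μ² P B_u R⁻¹ B_uᵀ P = 0`, and gain `K := -μ R⁻¹ B_uᵀ P`, for all
`x`, `d`, and all `f` with `fᵀ f ≤ c xᵀ x`, setting `v := K x` and
`w := A x + μ B_u v + μ B_u E v + B_f f + B_d d`, one has
`2 xᵀ P w ≤ -xᵀ (Q + Kᵀ R K + 2 Kᵀ R E K - (1/a_f) P B_f B_fᵀ P) x
  + (1/a_d) ‖P B_d‖² ‖d‖²`. -/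
theorem stmt9 {n m g q : ℕ}
    (A P Q : Matrix (Fin n) (Fin n) ℝ) (Bu : Matrix (Fin n) (Fin m) ℝ)
    (R : Matrix (Fin m) (Fin m) ℝ) (μ af ad c : ℝ)
    (hPsymm : P.IsSymm) (hQsymm : Q.IsSymm) (hR : R.PosDef)
    (hμ : 0 < μ) (haf : 0 < af) (had : 0 < ad) (hc : 0 ≤ c)
    (Qf : Matrix (Fin n) (Fin n) ℝ) (hQf : Qf = Q + (af * c + ad) • (1 : Matrix (Fin n) (Fin n) ℝ))
    (hARE : Aᵀ * P + P * A + Qf - (μ ^ 2) • (P * Bu * R⁻¹ * Buᵀ * P) = 0)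
    (K : Matrix (Fin m) (Fin n) ℝ) (hK : K = (-μ) • (R⁻¹ * Buᵀ * P))
    (E : Matrix (Fin m) (Fin m) ℝ)
    (Bf : Matrix (Fin n) (Fin g) ℝ) (Bd : Matrix (Fin n) (Fin q) ℝ) :
    ∀ (x : Fin n → ℝ) (d : Fin q → ℝ) (f : Fin g → ℝ),
      f ⬝ᵥ f ≤ c * (x ⬝ᵥ x) →
      ∀ (v : Fin m → ℝ), v = K.mulVec x →
      ∀ (w : Fin n → ℝ),
        w = A.mulVec x + μ • Bu.mulVec v + μ • Bu.mulVec (E.mulVec v)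
            + Bf.mulVec f + Bd.mulVec d →
      2 * (x ⬝ᵥ P.mulVec w) ≤
        -(x ⬝ᵥ (Q + Kᵀ * R * K + (2 : ℝ) • (Kᵀ * R * E * K)
            - (1 / af) • (P * Bf * Bfᵀ * P)).mulVec x)
          + (1 / ad) * (l2OpNorm (P * Bd)) ^ 2 * (d ⬝ᵥ d) := by
  intro x d f hf v hv w hw
  -- matrix preliminaries
  have hRsym : Rᵀ = R := hR.isHermitian
  have hRinvsym : (R⁻¹)ᵀ = R⁻¹ := by
    rw [Matrix.transpose_nonsing_inv, hRsym]
  have hRunit : IsUnit R.det := hR.det_pos.ne'.isUnit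
  have hRinvR : R⁻¹ * R = 1 := Matrix.nonsing_inv_mul R hRunit
  have hPT : Pᵀ = P := hPsymm
  have hKT : Kᵀ = (-μ) • (P * Bu * R⁻¹) := by
    rw [hK, Matrix.transpose_smul, Matrix.transpose_mul, Matrix.transpose_mul,
      Matrix.transpose_transpose, hPT, hRinvsym, Matrix.mul_assoc]
  have hKTR : Kᵀ * R = (-μ) • (P * Bu) := by
    rw [hKT, Matrix.smul_mul, Matrix.mul_assoc, hRinvR, Matrix.mul_one]
  have hKRK : Kᵀ * R * K = (μ ^ 2) • (P * Bu * R⁻¹ * Buᵀ * P) := by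
    rw [hKTR, hK, Matrix.smul_mul, Matrix.mul_smul, smul_smul]
    rw [show -μ * -μ = μ ^ 2 by ring]
    congr 1
    rw [← Matrix.mul_assoc, ← Matrix.mul_assoc]
  have hARE' : Aᵀ * P + P * A = Kᵀ * R * K - Qf := by
    rw [hKRK]
    have := hARE
    linear_combination (norm := abel) this
  -- scalar abbreviations
  set sQ := x ⬝ᵥ Q.mulVec x with hsQ
  set s2 := x ⬝ᵥ (Kᵀ * R * K).mulVec x with hs2
  set s3 := x ⬝ᵥ (Kᵀ * R * E * K).mulVec x with hs3
  set sf2 := x ⬝ᵥ (P * Bf * Bfᵀ * P).mulVec x with hsf2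
  set xx := x ⬝ᵥ x with hxx
  -- identity (i)
  have t1eq : 2 * (x ⬝ᵥ P.mulVec (A.mulVec x)) = s2 - sQ - (af * c + ad) * xx := by
    have h1 : x ⬝ᵥ (Aᵀ * P).mulVec x = x ⬝ᵥ (P * A).mulVec x := by
      rw [dot_self_transpose (Aᵀ * P) x, Matrix.transpose_mul, Matrix.transpose_transpose, hPT]
    have h2 : x ⬝ᵥ (Aᵀ * P + P * A).mulVec x = s2 - sQ - (af * c + ad) * xx := by
      rw [hARE', hQf]
      simp [Matrix.sub_mulVec, Matrix.add_mulVec, dotProduct_sub, dotProduct_add,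
        Matrix.smul_mulVec, dotProduct_smul, Matrix.one_mulVec, smul_eq_mul, hs2, hsQ, hxx]
      ring
    rw [Matrix.add_mulVec, dotProduct_add, h1] at h2
    rw [← h2, ← Matrix.mulVec_mulVec]
    ring
  -- identity (ii)
  have t2eq : μ * (x ⬝ᵥ P.mulVec (Bu.mulVec v)) = -s2 := by
    have hmat : μ • (P * (Bu * K)) = -(Kᵀ * R * K) := by
      rw [← Matrix.mul_assoc, ← Matrix.smul_mul, show μ • (P * Bu) = -(Kᵀ * R) by
        rw [hKTR]; simp]
      simp [Matrix.neg_mul]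
    calc μ * (x ⬝ᵥ P.mulVec (Bu.mulVec v))
        = x ⬝ᵥ (μ • (P * (Bu * K))).mulVec x := by
          rw [hv, Matrix.mulVec_mulVec, Matrix.mulVec_mulVec, Matrix.smul_mulVec,
            dotProduct_smul, smul_eq_mul, Matrix.mul_assoc]
      _ = -s2 := by rw [hmat, Matrix.neg_mulVec, dotProduct_neg]
  -- identity (iii)
  have t3eq : μ * (x ⬝ᵥ P.mulVec (Bu.mulVec (E.mulVec v))) = -s3 := by
    have hmat : μ • (P * (Bu * (E * K))) = -(Kᵀ * R * E * K) := by
      rw [← Matrix.mul_assoc, ← Matrix.smul_mul, show μ • (P * Bu) = -(Kᵀ * R) by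
        rw [hKTR]; simp]
      simp [Matrix.neg_mul, Matrix.mul_assoc]
    calc μ * (x ⬝ᵥ P.mulVec (Bu.mulVec (E.mulVec v)))
        = x ⬝ᵥ (μ • (P * (Bu * (E * K)))).mulVec x := by
          rw [hv, Matrix.mulVec_mulVec, Matrix.mulVec_mulVec, Matrix.mulVec_mulVec,
            Matrix.smul_mulVec, dotProduct_smul, smul_eq_mul, Matrix.mul_assoc,
            Matrix.mul_assoc]
      _ = -s3 := by rw [hmat, Matrix.neg_mulVec, dotProduct_neg]
  -- inequality (iv)
  have t4le : 2 * (x ⬝ᵥ P.mulVec (Bf.mulVec f)) ≤ (1 / af) * sf2 + af * c * xx := by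
    set M := P * Bf with hM
    have hy : x ⬝ᵥ P.mulVec (Bf.mulVec f) = f ⬝ᵥ (Mᵀ.mulVec x) := by
      rw [Matrix.mulVec_mulVec, ← hM, dot_shift, dotProduct_comm]
    have hyy : (Mᵀ.mulVec x) ⬝ᵥ (Mᵀ.mulVec x) = sf2 := by
      rw [← dot_shift, Matrix.mulVec_mulVec, hsf2, hM]
      congr 2
      rw [Matrix.transpose_mul, hPT, ← Matrix.mul_assoc]
    have := young af haf f (Mᵀ.mulVec x)
    rw [hyy] at this
    have hfc : af * (f ⬝ᵥ f) ≤ af * c * xx := by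
      rw [mul_assoc]; exact mul_le_mul_of_nonneg_left hf haf.le
    rw [hy]
    linarith
  -- inequality (v)
  have t5le : 2 * (x ⬝ᵥ P.mulVec (Bd.mulVec d)) ≤
      ad * xx + (1 / ad) * (l2OpNorm (P * Bd)) ^ 2 * (d ⬝ᵥ d) := by
    have hy : x ⬝ᵥ P.mulVec (Bd.mulVec d) = x ⬝ᵥ ((P * Bd).mulVec d) := by
      rw [Matrix.mulVec_mulVec]
    have := young ad had x ((P * Bd).mulVec d)
    have hb := opnorm_bound (P * Bd) d
    have h1ad : (0:ℝ) ≤ 1 / ad := by positivity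
    have := mul_le_mul_of_nonneg_left hb h1ad
    rw [hy]
    nlinarith [young ad had x ((P * Bd).mulVec d)]
  -- expand LHS
  have hLHS : 2 * (x ⬝ᵥ P.mulVec w) =
      2 * (x ⬝ᵥ P.mulVec (A.mulVec x)) + 2 * (μ * (x ⬝ᵥ P.mulVec (Bu.mulVec v)))
      + 2 * (μ * (x ⬝ᵥ P.mulVec (Bu.mulVec (E.mulVec v))))
      + 2 * (x ⬝ᵥ P.mulVec (Bf.mulVec f)) + 2 * (x ⬝ᵥ P.mulVec (Bd.mulVec d)) := by
    rw [hw]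
    simp only [Matrix.mulVec_add, Matrix.mulVec_smul, dotProduct_add, dotProduct_smul,
      smul_eq_mul]
    ring
  -- expand RHS matrix
  have hRHS : -(x ⬝ᵥ (Q + Kᵀ * R * K + (2 : ℝ) • (Kᵀ * R * E * K)
      - (1 / af) • (P * Bf * Bfᵀ * P)).mulVec x)
      = -sQ - s2 - 2 * s3 + (1 / af) * sf2 := by
    simp only [Matrix.sub_mulVec, Matrix.add_mulVec, dotProduct_sub, dotProduct_add,
      Matrix.smul_mulVec, dotProduct_smul, smul_eq_mul, hsQ, hs2, hs3, hsf2]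
    ring
  rw [hLHS, hRHS, t1eq]
  linarith
end

section
/- Let V be a finite set and g : V → V a function such that for all i, j, k ∈ V with i ≠ j and j ≠ k, if g(i) = j and g(j) = k then g(k) = k. Then for every i ∈ V, the point g(g(i)) is a fixed point of g, i.e., g(g(g(i))) = g(g(i)); equivalently, every node reaches a node with a selfloop in at most two steps. -/
/-- Let `V` be a finite set and `g : V → V` such that for all `i, j, k` with `i ≠ j` and
`j ≠ k`, if `g i = j` and `g j = k` then `g k = k` (the SMT connectivity constraint
of Algorithm 2).  Then for every `i`, the point `g (g i)` is a fixed point of `g`: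
`g (g (g i)) = g (g i)`; i.e., every node reaches a node with a selfloop in at most
two steps. -/
theorem stmt12 {V : Type*} [Fintype V] (g : V → V)
    (h : ∀ i j k : V, i ≠ j → j ≠ k → g i = j → g j = k → g k = k) :
    ∀ i : V, g (g (g i)) = g (g i) := by
  intro i
  by_cases h1 : i = g i
  · simp only [← h1]
  · by_cases h2 : g i = g (g i)
    · rw [← h2, ← h2]
    · exact h i (g i) (g (g i)) h1 h2 rfl rfl
end

section
/- Let V be a finite set and g : V → V a function such that for every i ∈ V, g(g(g(i))) = g(g(i)) (every node reaches a fixed point of g in at most two steps). Consider the simple undirected graph G on vertex set V whose edges are the pairs {i, g(i)} for those i with g(i) ≠ i. Then every connected component of G contains a vertex k with g(k) = k. -/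
/-- Let `V` be a finite set and `g : V → V` with `g (g (g i)) = g (g i)` for every `i`
(every node reaches a fixed point of `g` in at most two steps).  Let `G` be the
simple undirected graph on `V` whose edges are the pairs `{i, g i}` for `g i ≠ i`
(the symmetrization `SimpleGraph.fromRel (fun a b => g a = b)`).  Then every
connected component of `G` contains a vertex `k` with `g k = k`. -/
theorem stmt13 {V : Type*} [Fintype V] (g : V → V)
    (h : ∀ i : V, g (g (g i)) = g (g i)) :
    ∀ C : (SimpleGraph.fromRel (fun a b => g a = b)).ConnectedComponent,
      ∃ k : V, g k = k ∧
        (SimpleGraph.fromRel (fun a b => g a = b)).connectedComponentMk k = C := by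
  intro C
  refine C.ind ?_
  intro v
  refine ⟨g (g v), h v, ?_⟩
  apply SimpleGraph.ConnectedComponent.sound
  have step : ∀ a : V, (SimpleGraph.fromRel (fun a b => g a = b)).Reachable (g a) a := by
    intro a
    by_cases hga : g a = a
    · rw [hga]
    · exact (SimpleGraph.Adj.reachable (by
        refine SimpleGraph.fromRel_adj .. |>.mpr ⟨fun he => hga he, Or.inr rfl⟩))
  exact ((step (g v)).trans (step v)).symm.symm
end
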